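/- Let X be a topological space, h : X → X a continuous map, and z, x₊ ∈ X points such that the sequence hⁿ(z) converges to x₊. Let g ∈ SL(3,ℝ) have three real eigenvalues of pairwise distinct absolute values, let v₊ ∈ ℝ³ be an eigenvector for the eigenvalue of largest absolute value, and let P₋ ⊆ ℝ³ be the plane spanned by eigenvectors of the other two eigenvalues. If ξ : X → ℝP² is a continuous map satisfying ξ(h(x)) = g·ξ(x) for all x ∈ X and ξ(x₊) = [v₊], then ξ(z) does not lie in the projectivization of P₋ (i.e. ξ(z) ≠ [w] for every nonzero w ∈ P₋). -/

import Mathlib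

open Matrix Polynomial Filter

noncomputable instance projectivizationTopology (K V : Type*) [DivisionRing K] [AddCommGroup V]
    [Module K V] [TopologicalSpace V] : TopologicalSpace (Projectivization K V) :=
  instTopologicalSpaceQuotient

/-- The action of `GL(n,ℝ)` on the projectivization of `ℝⁿ`, `g·[v] = [gv]`. -/
noncomputable def projActGL {n : ℕ} (g : GL (Fin n) ℝ) :
    Projectivization ℝ (Fin n → ℝ) → Projectivization ℝ (Fin n → ℝ) :=
  Projectivization.map (Matrix.GeneralLinearGroup.toLin g).toLinearEquiv.toLinearMap
    (Matrix.GeneralLinearGroup.toLin g).toLinearEquiv.injective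

/-- The action of `SL(3,ℝ)` on the real projective plane `ℝP²`. -/
noncomputable def projActSL (g : Matrix.SpecialLinearGroup (Fin 3) ℝ) :
    Projectivization ℝ (Fin 3 → ℝ) → Projectivization ℝ (Fin 3 → ℝ) :=
  projActGL (Matrix.SpecialLinearGroup.toGL g)

/-- `projActSL` on classes of nonzero vectors is induced by `mulVec`. -/
lemma projActSL_mk (g : Matrix.SpecialLinearGroup (Fin 3) ℝ) (v : Fin 3 → ℝ) (hv : v ≠ 0)
    (hgv : (g : Matrix (Fin 3) (Fin 3) ℝ).mulVec v ≠ 0) :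
    projActSL g (Projectivization.mk ℝ v hv) =
      Projectivization.mk ℝ ((g : Matrix (Fin 3) (Fin 3) ℝ).mulVec v) hgv := by
  unfold projActSL projActGL
  rw [Projectivization.map_mk]
  congr 1

/-- The projectivization of a subspace is closed. -/
lemma isClosed_proj_submodule (P : Submodule ℝ (Fin 3 → ℝ)) :
    IsClosed {p : Projectivization ℝ (Fin 3 → ℝ) |
      ∃ v, ∃ hv : v ≠ 0, v ∈ P ∧ p = Projectivization.mk ℝ v hv} := by
  have hq : Topology.IsQuotientMap (Projectivization.mk' ℝ :
      {v : Fin 3 → ℝ // v ≠ 0} → Projectivization ℝ (Fin 3 → ℝ)) := isQuotientMap_quot_mk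
  rw [← hq.isClosed_preimage]
  have : (Projectivization.mk' ℝ) ⁻¹' {p : Projectivization ℝ (Fin 3 → ℝ) |
      ∃ v, ∃ hv : v ≠ 0, v ∈ P ∧ p = Projectivization.mk ℝ v hv} =
      Subtype.val ⁻¹' (P : Set (Fin 3 → ℝ)) := by
    ext ⟨v, hv⟩
    simp only [Set.mem_preimage, Set.mem_setOf_eq, SetLike.mem_coe]
    constructor
    · rintro ⟨u, hu, huP, hmk⟩
      rw [Projectivization.mk'_eq_mk, Projectivization.mk_eq_mk_iff] at hmk
      obtain ⟨a, rfl⟩ := hmk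
      exact P.smul_mem _ huP
    · intro hvP
      exact ⟨v, hv, hvP, (Projectivization.mk'_eq_mk ℝ ⟨v, hv⟩).symm⟩
  rw [this]
  exact P.closed_of_finiteDimensional.preimage continuous_subtype_val

/-- If `hⁿ(z) → x₊` in `S`, `g ∈ SL(3,ℝ)` has three real eigenvalues of
pairwise distinct absolute values, `v₊` is a top eigenvector and `P₋` the span of the two
remaining eigenvectors, then any continuous map `ξ : S → ℝP²` with `ξ∘h = g·ξ` and
`ξ(x₊) = [v₊]` satisfies `ξ(z) ∉ ℙ(P₋)`. -/
theorem image_avoids_repelling_line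
    {S : Type*} [TopologicalSpace S] (h : S → S) (hcont : Continuous h)
    (z xplus : S) (hlim : Tendsto (fun n => h^[n] z) atTop (nhds xplus))
    (g : Matrix.SpecialLinearGroup (Fin 3) ℝ) (lam : Fin 3 → ℝ)
    (hchar : (g : Matrix (Fin 3) (Fin 3) ℝ).charpoly =
      (X - C (lam 0)) * (X - C (lam 1)) * (X - C (lam 2)))
    (habs1 : |lam 1| < |lam 0|) (habs2 : |lam 2| < |lam 0|) (habs3 : |lam 1| ≠ |lam 2|)
    (vplus : Fin 3 → ℝ) (hvplus : vplus ≠ 0)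
    (hev : (g : Matrix (Fin 3) (Fin 3) ℝ).mulVec vplus = lam 0 • vplus)
    (v₁ v₂ : Fin 3 → ℝ) (hv₁ : v₁ ≠ 0) (hv₂ : v₂ ≠ 0)
    (hev₁ : (g : Matrix (Fin 3) (Fin 3) ℝ).mulVec v₁ = lam 1 • v₁)
    (hev₂ : (g : Matrix (Fin 3) (Fin 3) ℝ).mulVec v₂ = lam 2 • v₂)
    (Pminus : Submodule ℝ (Fin 3 → ℝ)) (hPminus : Pminus = Submodule.span ℝ {v₁, v₂})
    (ξ : S → Projectivization ℝ (Fin 3 → ℝ)) (hξ : Continuous ξ)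
    (hequiv : ∀ x, ξ (h x) = projActSL g (ξ x))
    (hfix : ξ xplus = Projectivization.mk ℝ vplus hvplus) :
    ∀ w : Fin 3 → ℝ, ∀ hw : w ≠ 0, w ∈ Pminus → ξ z ≠ Projectivization.mk ℝ w hw := by
  intro w hw hwP heq
  -- the linear equivalence given by `g`
  set e : (Fin 3 → ℝ) ≃ₗ[ℝ] (Fin 3 → ℝ) :=
    (Matrix.GeneralLinearGroup.toLin (Matrix.SpecialLinearGroup.toGL g)).toLinearEquiv with he
  have he_apply : ∀ v, e v = (g : Matrix (Fin 3) (Fin 3) ℝ).mulVec v := by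
    intro v; rfl
  -- `Pminus` is invariant under `g`
  have hinv : ∀ u ∈ Pminus, (g : Matrix (Fin 3) (Fin 3) ℝ).mulVec u ∈ Pminus := by
    intro u hu
    rw [hPminus] at hu ⊢
    induction hu using Submodule.span_induction with
    | mem x hx =>
      rcases hx with hx | hx
      · rw [hx, hev₁]
        exact Submodule.smul_mem _ _ (Submodule.subset_span (by left; rfl))
      · rw [Set.mem_singleton_iff] at hx
        rw [hx, hev₂]
        exact Submodule.smul_mem _ _ (Submodule.subset_span (by right; rfl))
    | zero => simp [Matrix.mulVec_zero]
    | add x y hx hy ihx ihy => rw [Matrix.mulVec_add]; exact Submodule.add_mem _ ihx ihy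
    | smul c x hx ihx => rw [Matrix.mulVec_smul]; exact Submodule.smul_mem _ _ ihx
  -- the orbit of `w`
  set u : ℕ → (Fin 3 → ℝ) := fun n => (⇑e)^[n] w with hu
  have hun : ∀ n, u n ≠ 0 := by
    intro n hn
    apply hw
    have : Function.Injective ((⇑e)^[n]) := Function.Injective.iterate e.injective n
    apply this
    show u n = (⇑e)^[n] 0
    rw [hn, Function.iterate_fixed (map_zero e)]
  have huP : ∀ n, u n ∈ Pminus := by
    intro n
    induction n with
    | zero => exact hwP
    | succ n ih =>
      have : u (n + 1) = e (u n) := Function.iterate_succ_apply' _ _ _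
      rw [this, he_apply]
      exact hinv _ ih
  -- the key dynamical identity
  have hkey : ∀ n, ξ (h^[n] z) = Projectivization.mk ℝ (u n) (hun n) := by
    intro n
    induction n with
    | zero => exact heq
    | succ n ih =>
      rw [Function.iterate_succ_apply', hequiv, ih]
      have hstep : u (n + 1) = (g : Matrix (Fin 3) (Fin 3) ℝ).mulVec (u n) :=
        Function.iterate_succ_apply' _ _ _
      rw [projActSL_mk g (u n) (hun n) (by rw [← hstep]; exact hun (n + 1))]
      exact Projectivization.mk_eq_mk_iff ℝ _ _ _ _ |>.mpr ⟨1, by simp [hstep]⟩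
  -- the closed set ℙ(P₋)
  set C : Set (Projectivization ℝ (Fin 3 → ℝ)) :=
    {p | ∃ v, ∃ hv : v ≠ 0, v ∈ Pminus ∧ p = Projectivization.mk ℝ v hv} with hC
  have hCclosed : IsClosed C := isClosed_proj_submodule Pminus
  have htend : Tendsto (fun n => ξ (h^[n] z)) atTop (nhds (ξ xplus)) :=
    (hξ.tendsto xplus).comp hlim
  have hmem : ξ xplus ∈ C :=
    hCclosed.mem_of_tendsto htend (Filter.Eventually.of_forall fun n =>
      ⟨u n, hun n, huP n, hkey n⟩)
  -- so `vplus ∈ Pminus`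
  rw [hfix] at hmem
  obtain ⟨v, hv, hvP, hmk⟩ := hmem
  rw [Projectivization.mk_eq_mk_iff] at hmk
  obtain ⟨a, ha⟩ := hmk
  have hvplusP : vplus ∈ Pminus := ha ▸ Pminus.smul_mem _ hvP
  -- but `vplus, v₁, v₂` are linearly independent
  have hne01 : lam 0 ≠ lam 1 := fun hl => absurd (congrArg abs hl).symm (ne_of_lt habs1)
  have hne02 : lam 0 ≠ lam 2 := fun hl => absurd (congrArg abs hl).symm (ne_of_lt habs2)
  have hne12 : lam 1 ≠ lam 2 := fun hl => habs3 (congrArg abs hl)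
  have hlaminj : Function.Injective lam := by
    intro i j hij
    fin_cases i <;> fin_cases j <;> simp_all <;>
      first
        | rfl
        | exact absurd hij hne01 | exact absurd hij.symm hne01
        | exact absurd hij hne02 | exact absurd hij.symm hne02
        | exact absurd hij hne12 | exact absurd hij.symm hne12
  have hli : LinearIndependent ℝ ![vplus, v₁, v₂] := by
    apply Module.End.eigenvectors_linearIndependent'
      ((g : Matrix (Fin 3) (Fin 3) ℝ).mulVecLin) lam hlaminj
    intro i
    fin_cases i
    · exact ⟨Module.End.mem_eigenspace_iff.mpr (by simpa using hev), hvplus⟩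
    · exact ⟨Module.End.mem_eigenspace_iff.mpr (by simpa using hev₁), hv₁⟩
    · exact ⟨Module.End.mem_eigenspace_iff.mpr (by simpa using hev₂), hv₂⟩
  -- derive the contradiction
  rw [hPminus, Submodule.mem_span_pair] at hvplusP
  obtain ⟨a', b', hab⟩ := hvplusP
  have := Fintype.linearIndependent_iff.mp hli ![1, -a', -b'] ?_ 0
  · simp at this
  · rw [Fin.sum_univ_three]
    simp only [Matrix.cons_val_zero, Matrix.cons_val_one, Matrix.head_cons,
      Matrix.cons_val_two, Matrix.tail_cons]
    rw [← hab]
    module
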